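/- There exists ε₀ > 0 such that for every ε ∈ (0, ε₀): (i) the total derivative (Jacobian matrix) of H_ε² at p_ε equals the matrix with rows (−1, −2y_ε) and (−2y_ε² + 2ε − 2x_ε + 6, −4(y_ε² − ε + x_ε − 3)y_ε − 1), where x_ε = y_ε = −1 + √(4+ε); (ii) the quantity 36 + 13ε − (4ε+18)√(4+ε) + ε² is positive; (iii) the eigenvalues of this matrix are exactly λ±(ε) = 9 + 2ε − 4√(4+ε) ± 2√(36 + 13ε − (4ε+18)√(4+ε) + ε²); and (iv) λ₊(ε)·λ₋(ε) = 1. -/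

import Mathlib

noncomputable section

/-- The area-preserving Hénon map `H_ε(x,y) = (y, -x + 3 + ε - y²)`. -/
def henon (ε : ℝ) : ℝ × ℝ → ℝ × ℝ := fun p => (p.2, -p.1 + 3 + ε - p.2 ^ 2)

/-- The second iterate `H_ε² = H_ε ∘ H_ε`. -/
def henon2 (ε : ℝ) : ℝ × ℝ → ℝ × ℝ := henon ε ∘ henon ε

/-- `x_ε = y_ε = -1 + √(4+ε)`. -/
def ye (ε : ℝ) : ℝ := -1 + Real.sqrt (4 + ε)

/-- The fixed point `p_ε = (x_ε, y_ε)`. -/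
def henonFixed (ε : ℝ) : ℝ × ℝ := (ye ε, ye ε)

/-- The eigenvalue `λ₊(ε)`. -/
def lamPlus (ε : ℝ) : ℝ :=
  9 + 2 * ε - 4 * Real.sqrt (4 + ε) +
    2 * Real.sqrt (36 + 13 * ε - (4 * ε + 18) * Real.sqrt (4 + ε) + ε ^ 2)

/-- The eigenvalue `λ₋(ε)`. -/
def lamMinus (ε : ℝ) : ℝ :=
  9 + 2 * ε - 4 * Real.sqrt (4 + ε) -
    2 * Real.sqrt (36 + 13 * ε - (4 * ε + 18) * Real.sqrt (4 + ε) + ε ^ 2)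

/-- The Jacobian matrix of `H_ε²` at the fixed point, with rows
`(-1, -2y_ε)` and `(-2y_ε² + 2ε - 2x_ε + 6, -4(y_ε² - ε + x_ε - 3)y_ε - 1)`. -/
def jacM (ε : ℝ) : Matrix (Fin 2) (Fin 2) ℝ :=
  !![-1, -2 * ye ε;
     -2 * ye ε ^ 2 + 2 * ε - 2 * ye ε + 6, -4 * (ye ε ^ 2 - ε + ye ε - 3) * ye ε - 1]

/-- The continuous linear map `ℝ² → ℝ²` associated to a `2 × 2` matrix. -/
def clmOfMatrix (M : Matrix (Fin 2) (Fin 2) ℝ) : ℝ × ℝ →L[ℝ] ℝ × ℝ :=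
  ((M 0 0 • ContinuousLinearMap.fst ℝ ℝ ℝ + M 0 1 • ContinuousLinearMap.snd ℝ ℝ ℝ).prod
   (M 1 0 • ContinuousLinearMap.fst ℝ ℝ ℝ + M 1 1 • ContinuousLinearMap.snd ℝ ℝ ℝ))

/-- (i) The total derivative of `H_ε²` at `p_ε` is the matrix `jacM ε`;
(ii) `36 + 13ε - (4ε+18)√(4+ε) + ε² > 0`;
(iii) the eigenvalues of this matrix are exactly `λ₊(ε)` and `λ₋(ε)`;
(iv) `λ₊(ε)·λ₋(ε) = 1`. -/
theorem henon2_jacobian_and_eigenvalues :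
    ∃ ε₀ : ℝ, 0 < ε₀ ∧ ∀ ε : ℝ, 0 < ε → ε < ε₀ →
      HasFDerivAt (henon2 ε) (clmOfMatrix (jacM ε)) (henonFixed ε) ∧
      0 < 36 + 13 * ε - (4 * ε + 18) * Real.sqrt (4 + ε) + ε ^ 2 ∧
      spectrum ℝ (jacM ε) = {lamPlus ε, lamMinus ε} ∧
      lamPlus ε * lamMinus ε = 1 := by
  refine ⟨1, one_pos, fun ε hε _ => ?_⟩
  set s := Real.sqrt (4 + ε) with hs_def
  have h4 : (0:ℝ) ≤ 4 + ε := by linarith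
  have hs2 : s ^ 2 = 4 + ε := Real.sq_sqrt h4
  have hs_gt : 2 < s := by
    have h2 : Real.sqrt 4 < s := Real.sqrt_lt_sqrt (by norm_num) (by linarith)
    have : Real.sqrt 4 = 2 := by
      rw [show (4:ℝ) = 2 ^ 2 by norm_num, Real.sqrt_sq (by norm_num)]
    linarith
  -- (ii) positivity of the discriminant
  have hfact : 36 + 13 * ε - (4 * ε + 18) * s + ε ^ 2 = s * (s - 1) ^ 2 * (s - 2) := by
    linear_combination (-s ^ 2 + 4 * s - 9 - ε) * hs2
  have hpos : 0 < 36 + 13 * ε - (4 * ε + 18) * s + ε ^ 2 := by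
    rw [hfact]
    have h1 : (0:ℝ) < s - 2 := by linarith
    have h2 : (0:ℝ) < (s - 1) ^ 2 := by nlinarith
    have h3 : (0:ℝ) < s := by linarith
    exact mul_pos (mul_pos h3 h2) h1
  set t := Real.sqrt (36 + 13 * ε - (4 * ε + 18) * s + ε ^ 2) with ht_def
  have ht2 : t ^ 2 = 36 + 13 * ε - (4 * ε + 18) * s + ε ^ 2 := Real.sq_sqrt hpos.le
  have hlp : lamPlus ε = 9 + 2 * ε - 4 * s + 2 * t := rfl
  have hlm : lamMinus ε = 9 + 2 * ε - 4 * s - 2 * t := rfl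
  -- matrix entries
  have e00 : jacM ε 0 0 = -1 := rfl
  have e01 : jacM ε 0 1 = -2 * ye ε := rfl
  have e10 : jacM ε 1 0 = -2 * ye ε ^ 2 + 2 * ε - 2 * ye ε + 6 := rfl
  have e11 : jacM ε 1 1 = -4 * (ye ε ^ 2 - ε + ye ε - 3) * ye ε - 1 := rfl
  refine ⟨?_, hpos, ?_, ?_⟩
  · -- (i) the derivative
    set y := ye ε with hy_def
    have hfun : henon2 ε = fun q : ℝ × ℝ =>
        (-q.1 + 3 + ε - q.2 * q.2,
         -q.2 + 3 + ε - (-q.1 + 3 + ε - q.2 * q.2) * (-q.1 + 3 + ε - q.2 * q.2)) := by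
      funext q
      simp only [henon2, henon, Function.comp]
      rw [Prod.mk.injEq]
      constructor <;> ring
    have hp : henonFixed ε = ((y, y) : ℝ × ℝ) := rfl
    rw [hfun, hp]
    have hsnd := hasFDerivAt_snd (𝕜 := ℝ) (p := ((y, y) : ℝ × ℝ))
    have hfst := hasFDerivAt_fst (𝕜 := ℝ) (p := ((y, y) : ℝ × ℝ))
    have hq2 : HasFDerivAt (fun q : ℝ × ℝ => q.2 * q.2)
        (y • ContinuousLinearMap.snd ℝ ℝ ℝ + y • ContinuousLinearMap.snd ℝ ℝ ℝ)
        ((y, y) : ℝ × ℝ) := hsnd.mul hsnd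
    have h1raw : HasFDerivAt (fun q : ℝ × ℝ => -q.1 + 3 + ε - q.2 * q.2)
        ((-(ContinuousLinearMap.fst ℝ ℝ ℝ)) -
          (y • ContinuousLinearMap.snd ℝ ℝ ℝ + y • ContinuousLinearMap.snd ℝ ℝ ℝ))
        ((y, y) : ℝ × ℝ) := ((hfst.neg.add_const 3).add_const ε).sub hq2
    have hu : HasFDerivAt
        (fun q : ℝ × ℝ => (-q.1 + 3 + ε - q.2 * q.2) * (-q.1 + 3 + ε - q.2 * q.2))
        ((-y + 3 + ε - y * y) • ((-(ContinuousLinearMap.fst ℝ ℝ ℝ)) -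
            (y • ContinuousLinearMap.snd ℝ ℝ ℝ + y • ContinuousLinearMap.snd ℝ ℝ ℝ)) +
         (-y + 3 + ε - y * y) • ((-(ContinuousLinearMap.fst ℝ ℝ ℝ)) -
            (y • ContinuousLinearMap.snd ℝ ℝ ℝ + y • ContinuousLinearMap.snd ℝ ℝ ℝ)))
        ((y, y) : ℝ × ℝ) := h1raw.mul h1raw
    have h2raw : HasFDerivAt
        (fun q : ℝ × ℝ =>
          -q.2 + 3 + ε - (-q.1 + 3 + ε - q.2 * q.2) * (-q.1 + 3 + ε - q.2 * q.2))
        ((-(ContinuousLinearMap.snd ℝ ℝ ℝ)) -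
         ((-y + 3 + ε - y * y) • ((-(ContinuousLinearMap.fst ℝ ℝ ℝ)) -
            (y • ContinuousLinearMap.snd ℝ ℝ ℝ + y • ContinuousLinearMap.snd ℝ ℝ ℝ)) +
          (-y + 3 + ε - y * y) • ((-(ContinuousLinearMap.fst ℝ ℝ ℝ)) -
            (y • ContinuousLinearMap.snd ℝ ℝ ℝ + y • ContinuousLinearMap.snd ℝ ℝ ℝ))))
        ((y, y) : ℝ × ℝ) := ((hsnd.neg.add_const 3).add_const ε).sub hu
    have h12 := HasFDerivAt.prodMk h1raw h2raw
    have heq : clmOfMatrix (jacM ε) =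
        (((-(ContinuousLinearMap.fst ℝ ℝ ℝ)) -
          (y • ContinuousLinearMap.snd ℝ ℝ ℝ + y • ContinuousLinearMap.snd ℝ ℝ ℝ)).prod
         ((-(ContinuousLinearMap.snd ℝ ℝ ℝ)) -
          ((-y + 3 + ε - y * y) • ((-(ContinuousLinearMap.fst ℝ ℝ ℝ)) -
             (y • ContinuousLinearMap.snd ℝ ℝ ℝ + y • ContinuousLinearMap.snd ℝ ℝ ℝ)) +
           (-y + 3 + ε - y * y) • ((-(ContinuousLinearMap.fst ℝ ℝ ℝ)) -
             (y • ContinuousLinearMap.snd ℝ ℝ ℝ + y • ContinuousLinearMap.snd ℝ ℝ ℝ))))) := by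
      refine ContinuousLinearMap.ext fun v => ?_
      apply Prod.ext
      · simp [clmOfMatrix, e00, e01]
        ring
      · simp [clmOfMatrix, e10, e11]
        ring
    rw [heq]
    exact h12
  · -- (iii) the spectrum
    have hy : ye ε = -1 + s := rfl
    have hdet : ∀ x : ℝ, (algebraMap ℝ (Matrix (Fin 2) (Fin 2) ℝ) x - jacM ε).det
        = (x - lamPlus ε) * (x - lamMinus ε) := by
      intro x
      have h00 : (algebraMap ℝ (Matrix (Fin 2) (Fin 2) ℝ) x - jacM ε) 0 0 = x - jacM ε 0 0 := by
        simp [Matrix.algebraMap_matrix_apply]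
      have h01 : (algebraMap ℝ (Matrix (Fin 2) (Fin 2) ℝ) x - jacM ε) 0 1 = - jacM ε 0 1 := by
        simp [Matrix.algebraMap_matrix_apply]
      have h10 : (algebraMap ℝ (Matrix (Fin 2) (Fin 2) ℝ) x - jacM ε) 1 0 = - jacM ε 1 0 := by
        simp [Matrix.algebraMap_matrix_apply]
      have h11 : (algebraMap ℝ (Matrix (Fin 2) (Fin 2) ℝ) x - jacM ε) 1 1 = x - jacM ε 1 1 := by
        simp [Matrix.algebraMap_matrix_apply]
      rw [Matrix.det_fin_two, h00, h01, h10, h11, e00, e01, e10, e11, hy, hlp, hlm]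
      linear_combination (4 * x * s - 8 * x - 16) * hs2 + 4 * ht2
    ext x
    simp only [Set.mem_insert_iff, Set.mem_singleton_iff]
    rw [spectrum.mem_iff, Matrix.isUnit_iff_isUnit_det, isUnit_iff_ne_zero, not_ne_iff,
      hdet x, mul_eq_zero, sub_eq_zero, sub_eq_zero]
  · -- (iv) product of eigenvalues
    rw [hlp, hlm]
    linear_combination 16 * hs2 - 4 * ht2
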